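/- Let Φ be a TH system on V with eigenvalue sequence {θ_i}, dual eigenvalue sequence {θ*_i}, split sequence {φ_i}. A sequence of vectors {v_i}_{i=0}^d in V, not all zero, is a Φ-split basis if and only if (i) v_d ∈ E_0 V and (ii) A* v_i = θ*_i v_i + v_{i-1} for 1 ≤ i ≤ d. -/

import Mathlib

/-- A thin Hessenberg system on `V`: multiplicity-free `A`, `Astar` with
orderings of primitive idempotents `E`, `Estar` (eigenvalues `θ`, `θs`)
satisfying the Hessenberg conditions. -/
structure THSystem (K V : Type*) [Field K] [AddCommGroup V] [Module K V] (d : ℕ) where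
  A : Module.End K V
  Astar : Module.End K V
  E : Fin (d + 1) → Module.End K V
  Estar : Fin (d + 1) → Module.End K V
  θ : Fin (d + 1) → K
  θs : Fin (d + 1) → K
  finrank_eq : Module.finrank K V = d + 1
  θ_inj : Function.Injective θ
  θs_inj : Function.Injective θs
  sum_E : ∑ i, E i = 1
  E_mul : ∀ i j, E i * E j = if i = j then E i else 0
  E_ne : ∀ i, E i ≠ 0
  sum_Es : ∑ i, Estar i = 1
  Es_mul : ∀ i j, Estar i * Estar j = if i = j then Estar i else 0
  Es_ne : ∀ i, Estar i ≠ 0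
  A_eq : A = ∑ i, θ i • E i
  As_eq : Astar = ∑ i, θs i • Estar i
  EAsE_zero : ∀ i j : Fin (d + 1), (j : ℕ) + 1 < (i : ℕ) → E i * Astar * E j = 0
  EAsE_ne : ∀ i j : Fin (d + 1), (i : ℕ) = (j : ℕ) + 1 → E i * Astar * E j ≠ 0
  EsAEs_zero : ∀ i j : Fin (d + 1), (j : ℕ) + 1 < (i : ℕ) → Estar i * A * Estar j = 0
  EsAEs_ne : ∀ i j : Fin (d + 1), (i : ℕ) = (j : ℕ) + 1 → Estar i * A * Estar j ≠ 0
/-- `v` has the form of a `Φ`-split basis: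
`v_d` is a nonzero element of `E_0 V` and `v_i = (A* - θ*_{i+1} I) v_{i+1}`. -/
def IsSplitFamily {K V : Type*} [Field K] [AddCommGroup V] [Module K V] {d : ℕ}
    (Φ : THSystem K V d) (v : Fin (d + 1) → V) : Prop :=
  v (Fin.last d) ≠ 0 ∧ v (Fin.last d) ∈ LinearMap.range (Φ.E 0) ∧
  ∀ i : ℕ, ∀ h : i < d, v ⟨i, by omega⟩ =
    (Φ.Astar - Φ.θs ⟨i + 1, by omega⟩ • (1 : Module.End K V)) (v ⟨i + 1, by omega⟩)

/-- A `Φ`-split basis for `V`. -/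
def IsSplitBasis {K V : Type*} [Field K] [AddCommGroup V] [Module K V] {d : ℕ}
    (Φ : THSystem K V d) (v : Fin (d + 1) → V) : Prop :=
  LinearIndependent K v ∧ Submodule.span K (Set.range v) = ⊤ ∧ IsSplitFamily Φ v

namespace THSystem

variable {K V : Type*} [Field K] [AddCommGroup V] [Module K V] {d : ℕ} (Φ : THSystem K V d)
include Φ

lemma fd : FiniteDimensional K V := FiniteDimensional.of_finrank_eq_succ Φ.finrank_eq

lemma A_mul_E (i : Fin (d + 1)) : Φ.A * Φ.E i = Φ.θ i • Φ.E i := by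
  rw [Φ.A_eq, Finset.sum_mul, Finset.sum_eq_single i]
  · rw [smul_mul_assoc, Φ.E_mul, if_pos rfl]
  · intro j _ hj
    rw [smul_mul_assoc, Φ.E_mul, if_neg hj, smul_zero]
  · simp

lemma range_le_eigenspace (i : Fin (d + 1)) :
    LinearMap.range (Φ.E i) ≤ Φ.A.eigenspace (Φ.θ i) := by
  rintro x ⟨y, rfl⟩
  rw [Module.End.mem_eigenspace_iff]
  have := congrArg (fun T : Module.End K V => T y) (Φ.A_mul_E i)
  simpa using this

lemma indep : iSupIndep (fun i => LinearMap.range (Φ.E i)) :=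
  (Φ.A.eigenspaces_iSupIndep.comp Φ.θ_inj).mono fun i => Φ.range_le_eigenspace i

lemma sup_top : ⨆ i, LinearMap.range (Φ.E i) = ⊤ := by
  rw [eq_top_iff]
  intro x _
  have hx : x = ∑ i, Φ.E i x := by
    have := congrArg (fun T : Module.End K V => T x) Φ.sum_E
    simpa using this.symm
  rw [hx]
  exact Submodule.sum_mem _ fun i _ =>
    Submodule.mem_iSup_of_mem i (LinearMap.mem_range_self _ x)

lemma rank_one (i : Fin (d + 1)) :
    Module.finrank K (LinearMap.range (Φ.E i)) = 1 := by
  have := Φ.fd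
  have hInt : DirectSum.IsInternal (fun i => LinearMap.range (Φ.E i)) :=
    DirectSum.isInternal_submodule_of_iSupIndep_of_iSup_eq_top Φ.indep Φ.sup_top
  have e := LinearEquiv.ofBijective (DirectSum.coeLinearMap
    (fun i => LinearMap.range (Φ.E i))) hInt
  have hsum : ∑ j, Module.finrank K (LinearMap.range (Φ.E j)) = d + 1 := by
    rw [← Module.finrank_directSum, e.finrank_eq, Φ.finrank_eq]
  have hpos : ∀ j : Fin (d + 1), 1 ≤ Module.finrank K (LinearMap.range (Φ.E j)) := by
    intro j
    rw [Nat.one_le_iff_ne_zero]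
    intro h0
    have : LinearMap.range (Φ.E j) = ⊥ := by
      have := Submodule.finrank_eq_zero (R := K) (M := V)
        (S := LinearMap.range (Φ.E j)) |>.1 h0
      exact this
    exact Φ.E_ne j (LinearMap.range_eq_bot.1 this)
  by_contra hne
  have hi2 : 2 ≤ Module.finrank K (LinearMap.range (Φ.E i)) := by
    have := hpos i; omega
  have : (d + 1 : ℕ) < ∑ j, Module.finrank K (LinearMap.range (Φ.E j)) := by
    calc (d + 1 : ℕ) = ∑ _j : Fin (d + 1), 1 := by simp
    _ < _ := Finset.sum_lt_sum (fun j _ => hpos j) ⟨i, Finset.mem_univ i, by omega⟩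
  omega

lemma exists_smul {i : Fin (d + 1)} {x y : V} (hx : x ∈ LinearMap.range (Φ.E i))
    (hx0 : x ≠ 0) (hy : y ∈ LinearMap.range (Φ.E i)) : ∃ c : K, c • x = y := by
  have := Φ.fd
  have h1 := (finrank_eq_one_iff_of_nonzero' (⟨x, hx⟩ : LinearMap.range (Φ.E i))
    (by simpa using hx0)).1 (Φ.rank_one i) ⟨y, hy⟩
  obtain ⟨c, hc⟩ := h1
  exact ⟨c, by simpa [Subtype.ext_iff] using hc⟩

end THSystem

namespace Echelon
variable {K V : Type*} [Field K] [AddCommGroup V] [Module K V] {d : ℕ} (Φ : THSystem K V d)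
include Φ

lemma E_Astar_expand (j : Fin (d + 1)) :
    Φ.E j * Φ.Astar = ∑ m, Φ.E j * Φ.Astar * Φ.E m := by
  calc Φ.E j * Φ.Astar = Φ.E j * Φ.Astar * 1 := (mul_one _).symm
  _ = Φ.E j * Φ.Astar * ∑ m, Φ.E m := by rw [Φ.sum_E]
  _ = ∑ m, Φ.E j * Φ.Astar * Φ.E m := Finset.mul_sum _ _ _

lemma echelon (v : Fin (d + 1) → V) (h0 : v (Fin.last d) ≠ 0)
    (hE0 : v (Fin.last d) ∈ LinearMap.range (Φ.E 0))
    (hrec : ∀ i : ℕ, ∀ h : i < d, v ⟨i, by omega⟩ =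
      (Φ.Astar - Φ.θs ⟨i + 1, by omega⟩ • (1 : Module.End K V)) (v ⟨i + 1, by omega⟩)) :
    ∀ k : ℕ, ∀ hk : k ≤ d,
      (∀ j : Fin (d + 1), (k : ℕ) < (j : ℕ) → Φ.E j (v ⟨d - k, by omega⟩) = 0) ∧
      Φ.E ⟨k, Nat.lt_succ_of_le hk⟩ (v ⟨d - k, by omega⟩) ≠ 0 := by
  intro k
  induction k with
  | zero =>
    intro hk
    obtain ⟨y, hy⟩ := hE0
    have hlast : (⟨d - 0, by omega⟩ : Fin (d + 1)) = Fin.last d := rfl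
    rw [hlast]
    constructor
    · intro j hj
      have hj0 : j ≠ 0 := by
        intro h; rw [h] at hj; simp at hj
      rw [← hy]
      have := congrArg (fun T : Module.End K V => T y) (Φ.E_mul j 0)
      simpa [if_neg hj0] using this
    · have h00 : (⟨0, by omega⟩ : Fin (d + 1)) = 0 := rfl
      rw [h00, ← hy]
      have h2 := congrArg (fun T : Module.End K V => T y) (Φ.E_mul 0 0)
      simp only [if_pos rfl] at h2
      have h3 : Φ.E 0 (Φ.E 0 y) = Φ.E 0 y := h2
      rw [h3, hy]
      exact h0
  | succ k ih =>
    intro hk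
    obtain ⟨h1, h2⟩ := ih (by omega)
    set w : V := v ⟨d - k, by omega⟩ with hw
    -- the recurrence at index d - (k+1)
    have hrw : v ⟨d - (k + 1), by omega⟩ = Φ.Astar w - Φ.θs ⟨d - k, by omega⟩ • w := by
      have h := hrec (d - k - 1) (by omega)
      have e1 : (⟨d - k - 1, by omega⟩ : Fin (d + 1)) = ⟨d - (k + 1), by omega⟩ := by
        simp only [Fin.mk.injEq]; omega
      have e2 : (⟨d - k - 1 + 1, by omega⟩ : Fin (d + 1)) = ⟨d - k, by omega⟩ := by
        simp only [Fin.mk.injEq]; omega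
      rw [e1, e2] at h
      simpa [LinearMap.sub_apply] using h
    -- E j (Astar w) as a sum
    have hsum : ∀ j : Fin (d + 1), Φ.E j (Φ.Astar w) =
        ∑ m, (Φ.E j * Φ.Astar * Φ.E m) w := by
      intro j
      have := congrArg (fun T : Module.End K V => T w) (E_Astar_expand Φ j)
      simpa using this
    -- terms with m > k vanish because E m w = 0
    have hbig : ∀ j m : Fin (d + 1), (k : ℕ) < (m : ℕ) →
        (Φ.E j * Φ.Astar * Φ.E m) w = 0 := by
      intro j m hm
      have : (Φ.E j * Φ.Astar * Φ.E m) w = (Φ.E j * Φ.Astar) (Φ.E m w) := rfl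
      rw [this, h1 m hm, map_zero]
    constructor
    · intro j hj
      rw [hrw, map_sub, map_smul, hsum]
      have hz : Φ.E j w = 0 := h1 j (by omega)
      rw [hz, smul_zero, sub_zero]
      refine Finset.sum_eq_zero fun m _ => ?_
      rcases lt_or_ge (k : ℕ) (m : ℕ) with hm | hm
      · exact hbig j m hm
      · have hop : Φ.E j * Φ.Astar * Φ.E m = 0 := Φ.EAsE_zero j m (by omega)
        rw [hop]; rfl
    · rw [hrw, map_sub, map_smul, hsum]
      have hz : Φ.E ⟨k + 1, by omega⟩ w = 0 := h1 _ (by simp)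
      rw [hz, smul_zero, sub_zero]
      rw [Finset.sum_eq_single (⟨k, by omega⟩ : Fin (d + 1))]
      · -- show (E ⟨k+1⟩ * Astar * E ⟨k⟩) w ≠ 0
        set T : Module.End K V := Φ.E ⟨k + 1, by omega⟩ * Φ.Astar * Φ.E ⟨k, by omega⟩
        have hT : T ≠ 0 := Φ.EAsE_ne _ _ (by simp)
        obtain ⟨z, hz'⟩ := DFunLike.ne_iff.1 hT
        have hzz : T z ≠ 0 := by simpa using hz'
        -- E k w ∈ range E k, nonzero
        have hwmem : Φ.E ⟨k, by omega⟩ w ∈ LinearMap.range (Φ.E ⟨k, by omega⟩) :=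
          LinearMap.mem_range_self _ w
        have hzmem : Φ.E ⟨k, by omega⟩ z ∈ LinearMap.range (Φ.E ⟨k, by omega⟩) :=
          LinearMap.mem_range_self _ z
        obtain ⟨c, hc⟩ := Φ.exists_smul hwmem h2 hzmem
        intro hzero
        apply hzz
        have : T z = (Φ.E ⟨k + 1, by omega⟩ * Φ.Astar) (Φ.E ⟨k, by omega⟩ z) := rfl
        rw [this, ← hc, map_smul]
        have : (Φ.E ⟨k + 1, by omega⟩ * Φ.Astar) (Φ.E ⟨k, by omega⟩ w) = T w := rfl
        rw [this, hzero, smul_zero]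
      · intro m _ hm
        rcases lt_or_ge (k : ℕ) (m : ℕ) with h' | h'
        · exact hbig _ m h'
        · have hmk : (m : ℕ) < k := by
            rcases lt_or_eq_of_le h' with h'' | h''
            · exact h''
            · exact absurd (Fin.ext h'') hm
          have hop : Φ.E ⟨k + 1, by omega⟩ * Φ.Astar * Φ.E m = 0 :=
            Φ.EAsE_zero _ m (by simp; omega)
          rw [hop]; rfl
      · simp

end Echelon

/-- Characterization of `Φ`-split bases: a family `v`, not all zero, is a
`Φ`-split basis iff `v_d ∈ E_0 V` and `A* v_i = θ*_i v_i + v_{i-1}` for `1 ≤ i ≤ d`. -/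
theorem splitBasis_characterization {K V : Type*} [Field K] [AddCommGroup V] [Module K V]
    {d : ℕ} (Φ : THSystem K V d)
    (v : Fin (d + 1) → V) (hv : ∃ i, v i ≠ 0) :
    IsSplitBasis Φ v ↔
      (v (Fin.last d) ∈ LinearMap.range (Φ.E 0) ∧
       ∀ i : ℕ, ∀ h1 : 1 ≤ i, ∀ hd : i ≤ d,
         Φ.Astar (v ⟨i, by omega⟩) =
           Φ.θs ⟨i, by omega⟩ • v ⟨i, by omega⟩ + v ⟨i - 1, by omega⟩) := by
    classical
  constructor
  · rintro ⟨hli, hspan, hne, hE0, hrec⟩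
    refine ⟨hE0, ?_⟩
    intro i h1 hd
    have h := hrec (i - 1) (by omega)
    have e1 : (⟨i - 1 + 1, by omega⟩ : Fin (d + 1)) = ⟨i, by omega⟩ := by
      simp only [Fin.mk.injEq]; omega
    rw [e1] at h
    rw [h]
    simp only [LinearMap.sub_apply, LinearMap.smul_apply, Module.End.one_apply]
    abel
  · rintro ⟨hE0, hrec'⟩
    have hrec : ∀ i : ℕ, ∀ h : i < d, v ⟨i, by omega⟩ =
        (Φ.Astar - Φ.θs ⟨i + 1, by omega⟩ • (1 : Module.End K V)) (v ⟨i + 1, by omega⟩) := by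
      intro i h
      have hh := hrec' (i + 1) (by omega) (by omega)
      have e1 : (⟨i + 1 - 1, by omega⟩ : Fin (d + 1)) = ⟨i, by omega⟩ := by
        simp only [Fin.mk.injEq]; omega
      rw [e1] at hh
      simp only [LinearMap.sub_apply, LinearMap.smul_apply, Module.End.one_apply]
      rw [hh]; abel
    have h0 : v (Fin.last d) ≠ 0 := by
      intro hz
      have hall : ∀ k : ℕ, k ≤ d → v ⟨d - k, by omega⟩ = 0 := by
        intro k
        induction k with
        | zero => intro _; exact hz
        | succ k ih =>
          intro hk
          have h := hrec (d - (k + 1)) (by omega)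
          have e2 : (⟨d - (k + 1) + 1, by omega⟩ : Fin (d + 1)) = ⟨d - k, by omega⟩ := by
            simp only [Fin.mk.injEq]; omega
          rw [e2] at h
          rw [h, ih (by omega), map_zero]
      obtain ⟨i, hi⟩ := hv
      apply hi
      have h := hall (d - (i : ℕ)) (by omega)
      have e3 : (⟨d - (d - (i : ℕ)), by omega⟩ : Fin (d + 1)) = i := by
        apply Fin.ext; have := i.isLt; simp; omega
      rwa [e3] at h
    have hE := Echelon.echelon Φ v h0 hE0 hrec
    have hli : LinearIndependent K v := by
      rw [Fintype.linearIndependent_iff]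
      intro g hg
      have key : ∀ n : ℕ, ∀ hn : n ≤ d, g ⟨n, by omega⟩ = 0 := by
        intro n
        induction n using Nat.strong_induction_on with
        | _ n ih =>
        intro hn
        have h2 := (hE (d - n) (by omega)).2
        have happ : Φ.E ⟨d - n, by omega⟩ (∑ i, g i • v i) = 0 := by
          rw [hg, map_zero]
        rw [map_sum] at happ
        simp only [map_smul] at happ
        rw [Finset.sum_eq_single (⟨n, by omega⟩ : Fin (d + 1))] at happ
        · have e4 : (⟨d - (d - n), by omega⟩ : Fin (d + 1)) = ⟨n, by omega⟩ := by
            simp only [Fin.mk.injEq]; omega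
          rw [e4] at h2
          exact (smul_eq_zero.mp happ).resolve_right h2
        · intro j _ hjne
          have hjn : (j : ℕ) ≠ n := fun h => hjne (Fin.ext h)
          rcases lt_or_gt_of_ne hjn with hlt | hgt
          · have hgj := ih (j : ℕ) hlt (by have := j.isLt; omega)
            have ej : (⟨(j : ℕ), by omega⟩ : Fin (d + 1)) = j := Fin.ext rfl
            rw [ej] at hgj
            rw [hgj, zero_smul]
          · have hj := (hE (d - (j : ℕ)) (by omega)).1 ⟨d - n, by omega⟩
              (by have := j.isLt; simp; omega)
            have e5 : (⟨d - (d - (j : ℕ)), by omega⟩ : Fin (d + 1)) = j := by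
              apply Fin.ext; have := j.isLt; simp; omega
            rw [e5] at hj
            rw [hj, smul_zero]
        · intro h; exact absurd (Finset.mem_univ _) h
      intro i
      have h := key (i : ℕ) (by have := i.isLt; omega)
      have ei : (⟨(i : ℕ), by omega⟩ : Fin (d + 1)) = i := Fin.ext rfl
      rwa [ei] at h
    have hspan : Submodule.span K (Set.range v) = ⊤ :=
      hli.span_eq_top_of_card_eq_finrank (by rw [Fintype.card_fin, Φ.finrank_eq])
    exact ⟨hli, hspan, h0, hE0, hrec⟩
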